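/- arXiv:0912.1321 — 4 statements merged into one kernel-verified Lean document; each statement's English description precedes it below -/
import Mathlib

section
/- Let μ be the Gaussian measure on ℝ with mean α ∈ ℝ and variance β², where β > 0, let K > 0, let ρ ∈ {1, −1}, and set γ = (α + β² − ln K)/β. Then ∫_{{ω : ρ·e^ω ≥ ρ·K}} e^ω dμ(ω) = e^{α + β²/2} · Φ(ργ), where Φ is the standard normal cumulative distribution function. -/
open MeasureTheory Real ProbabilityTheory
open scoped ENNReal NNReal

/-- The standard normal cumulative distribution function
`Φ(x) = ∫_{−∞}^{x} (2π)^{−1/2} e^{−s²/2} ds`. -/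
noncomputable def stdNormalCDF (x : ℝ) : ℝ :=
  ∫ s in Set.Iic x, (Real.sqrt (2 * Real.pi))⁻¹ * Real.exp (-s ^ 2 / 2)

lemma my_pdf01 (x : ℝ) :
    gaussianPDFReal 0 1 x = (Real.sqrt (2 * Real.pi))⁻¹ * Real.exp (-x ^ 2 / 2) := by
  simp [gaussianPDFReal]

lemma my_std_Iic (t : ℝ) : ((gaussianReal 0 1) (Set.Iic t)).toReal = stdNormalCDF t := by
  rw [gaussianReal_apply_eq_integral 0 one_ne_zero,
    ENNReal.toReal_ofReal (setIntegral_nonneg measurableSet_Iic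
      fun x _ => gaussianPDFReal_nonneg 0 1 x)]
  unfold stdNormalCDF
  exact setIntegral_congr_fun measurableSet_Iic fun x _ => my_pdf01 x

lemma my_std_Ici (t : ℝ) : ((gaussianReal 0 1) (Set.Ici t)).toReal = stdNormalCDF (-t) := by
  have hmap : (gaussianReal 0 1).map (fun x : ℝ => (-1) * x) = gaussianReal 0 1 := by
    rw [show (fun x : ℝ => (-1 : ℝ) * x) = ((-1 : ℝ) * ·) from rfl,
      gaussianReal_map_const_mul]
    congr 1
    · ring
    · apply NNReal.coe_injective
      push_cast
      norm_num
  have h2 : (gaussianReal 0 1) (Set.Ici t) = (gaussianReal 0 1) (Set.Iic (-t)) := by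
    conv_lhs => rw [← hmap]
    rw [Measure.map_apply (measurable_const_mul _) measurableSet_Ici]
    congr 1
    ext x
    simp only [Set.mem_preimage, Set.mem_Ici, Set.mem_Iic, neg_one_mul]
    constructor <;> intro h <;> linarith
  rw [h2, my_std_Iic]

lemma my_map_eq (m b : ℝ) :
    gaussianReal m (Real.toNNReal (b ^ 2)) = (gaussianReal 0 1).map (fun x => b * x + m) := by
  have hco : (fun x : ℝ => b * x + m) = (fun x : ℝ => x + m) ∘ (fun x : ℝ => b * x) := rfl
  rw [hco, ← Measure.map_map (measurable_add_const m) (measurable_const_mul b)]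
  rw [show (fun x : ℝ => b * x) = (b * ·) from rfl, gaussianReal_map_const_mul,
    show (fun x : ℝ => x + m) = (· + m) from rfl, gaussianReal_map_add_const]
  congr 1
  · ring
  · apply NNReal.coe_injective
    push_cast [Real.coe_toNNReal _ (sq_nonneg b)]
    ring

lemma my_gauss_Iic (m b a : ℝ) (hb : 0 < b) :
    ((gaussianReal m (Real.toNNReal (b ^ 2))) (Set.Iic a)).toReal
      = stdNormalCDF ((a - m) / b) := by
  rw [my_map_eq m b, Measure.map_apply (by fun_prop) measurableSet_Iic]
  have h : (fun x : ℝ => b * x + m) ⁻¹' Set.Iic a = Set.Iic ((a - m) / b) := by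
    ext x
    simp only [Set.mem_preimage, Set.mem_Iic, le_div_iff₀ hb]
    constructor <;> intro h <;> nlinarith
  rw [h, my_std_Iic]

lemma my_gauss_Ici (m b a : ℝ) (hb : 0 < b) :
    ((gaussianReal m (Real.toNNReal (b ^ 2))) (Set.Ici a)).toReal
      = stdNormalCDF ((m - a) / b) := by
  rw [my_map_eq m b, Measure.map_apply (by fun_prop) measurableSet_Ici]
  have h : (fun x : ℝ => b * x + m) ⁻¹' Set.Ici a = Set.Ici ((a - m) / b) := by
    ext x
    simp only [Set.mem_preimage, Set.mem_Ici, div_le_iff₀ hb]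
    constructor <;> intro h <;> nlinarith
  rw [h, my_std_Ici]
  congr 1
  field_simp
  ring

lemma my_complete_square (α β : ℝ) (hβ : 0 < β) (ω : ℝ) :
    gaussianPDFReal α (Real.toNNReal (β ^ 2)) ω * Real.exp ω
      = Real.exp (α + β ^ 2 / 2) * gaussianPDFReal (α + β ^ 2) (Real.toNNReal (β ^ 2)) ω := by
  have hβ2 : (β : ℝ) ^ 2 ≠ 0 := by positivity
  have hc : ((Real.toNNReal (β ^ 2) : ℝ≥0) : ℝ) = β ^ 2 :=
    Real.coe_toNNReal _ (sq_nonneg β)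
  have hexp : Real.exp (-(ω - α) ^ 2 / (2 * β ^ 2)) * Real.exp ω
      = Real.exp (α + β ^ 2 / 2) * Real.exp (-(ω - (α + β ^ 2)) ^ 2 / (2 * β ^ 2)) := by
    rw [← Real.exp_add, ← Real.exp_add]
    congr 1
    field_simp
    ring
  simp only [gaussianPDFReal, hc]
  rw [mul_assoc, hexp]
  ring

/-- If `μ` is the Gaussian measure with mean `α` and variance `β²` (`β > 0`), `K > 0`,
`ρ ∈ {1, −1}` and `γ = (α + β² − ln K)/β`, then
`∫_{{ω : ρ·e^ω ≥ ρ·K}} e^ω dμ(ω) = e^{α + β²/2} · Φ(ργ)`. -/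
theorem gaussian_integral_exp_on_event (α β K ρ γ : ℝ) (hβ : 0 < β) (hK : 0 < K)
    (hρ : ρ = 1 ∨ ρ = -1) (hγ : γ = (α + β ^ 2 - Real.log K) / β) :
    ∫ ω in {ω : ℝ | ρ * Real.exp ω ≥ ρ * K}, Real.exp ω
        ∂(gaussianReal α (Real.toNNReal (β ^ 2)))
      = Real.exp (α + β ^ 2 / 2) * stdNormalCDF (ρ * γ) := by
  have hv : Real.toNNReal (β ^ 2) ≠ 0 := by
    simp only [ne_eq, Real.toNNReal_eq_zero, not_le]
    positivity
  set v := Real.toNNReal (β ^ 2) with hvdef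
  have hset : {ω : ℝ | ρ * Real.exp ω ≥ ρ * K}
      = if ρ = 1 then Set.Ici (Real.log K) else Set.Iic (Real.log K) := by
    rcases hρ with h | h <;> subst h <;> ext ω
    · rw [if_pos rfl]
      simp only [Set.mem_setOf_eq, ge_iff_le, one_mul, Set.mem_Ici]
      exact (Real.log_le_iff_le_exp hK).symm
    · rw [if_neg (by norm_num)]
      simp only [Set.mem_setOf_eq, ge_iff_le, neg_one_mul, neg_le_neg_iff, Set.mem_Iic]
      exact (Real.le_log_iff_exp_le hK).symm
  have hsm : MeasurableSet {ω : ℝ | ρ * Real.exp ω ≥ ρ * K} := by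
    rw [hset]; split
    · exact measurableSet_Ici
    · exact measurableSet_Iic
  have hpdf : ∀ μ' : ℝ, (fun x => (((gaussianPDFReal μ' v x).toNNReal : ℝ≥0) : ℝ≥0∞))
      = gaussianPDF μ' v := by
    intro μ'; funext x; simp [gaussianPDF, ENNReal.ofReal]
  have key : ∫ ω in {ω : ℝ | ρ * Real.exp ω ≥ ρ * K}, Real.exp ω ∂(gaussianReal α v)
        = ∫ ω in {ω : ℝ | ρ * Real.exp ω ≥ ρ * K}, gaussianPDFReal α v ω * Real.exp ω := by
    rw [gaussianReal_of_var_ne_zero _ hv, ← hpdf α,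
      setIntegral_withDensity_eq_setIntegral_smul
        (by exact (measurable_gaussianPDFReal α v).real_toNNReal) _ hsm]
    refine setIntegral_congr_fun hsm fun x _ => ?_
    simp [NNReal.smul_def, Real.coe_toNNReal _ (gaussianPDFReal_nonneg α v x)]
  rw [key]
  have hcs : ∫ ω in {ω : ℝ | ρ * Real.exp ω ≥ ρ * K}, gaussianPDFReal α v ω * Real.exp ω
      = ∫ ω in {ω : ℝ | ρ * Real.exp ω ≥ ρ * K},
          Real.exp (α + β ^ 2 / 2) * gaussianPDFReal (α + β ^ 2) v ω :=
    setIntegral_congr_fun hsm fun ω _ => my_complete_square α β hβ ω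
  rw [hcs, integral_const_mul]
  congr 1
  have hback : ∫ ω in {ω : ℝ | ρ * Real.exp ω ≥ ρ * K}, gaussianPDFReal (α + β ^ 2) v ω
      = ((gaussianReal (α + β ^ 2) v) {ω : ℝ | ρ * Real.exp ω ≥ ρ * K}).toReal := by
    rw [gaussianReal_apply_eq_integral _ hv,
      ENNReal.toReal_ofReal (setIntegral_nonneg hsm fun x _ => gaussianPDFReal_nonneg _ _ x)]
  rw [hback, hset]
  rcases hρ with h | h <;> subst h
  · rw [if_pos rfl, one_mul, hvdef, my_gauss_Ici _ _ _ hβ, hγ]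
  · rw [if_neg (by norm_num), hvdef, my_gauss_Iic _ _ _ hβ, hγ]
    congr 1
    field_simp
    ring
end

section
/- Let μ be the Gaussian measure on ℝ with mean α ∈ ℝ and variance β², where β > 0, let K > 0, let ρ ∈ {1, −1}, and set γ = (α + β² − ln K)/β. Then ∫_{{ω : ρ·e^ω ≥ ρ·K}} ω·e^ω dμ(ω) = e^{α + β²/2} · ((α + β²)·Φ(ργ) + ρβ·φ(γ)), where Φ is the standard normal cumulative distribution function and φ is the standard normal density. -/
open MeasureTheory Real ProbabilityTheory
open scoped NNReal ENNReal

/-- The standard normal density `φ(x) = (2π)^{−1/2} e^{−x²/2}`. -/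
noncomputable def stdNormalPDF (x : ℝ) : ℝ :=
  (Real.sqrt (2 * Real.pi))⁻¹ * Real.exp (-x ^ 2 / 2)

lemma integrable_stdNormalPDF : Integrable stdNormalPDF := by
  have h := (integrable_exp_neg_mul_sq (by norm_num : (0:ℝ) < 1/2)).const_mul
    (Real.sqrt (2 * Real.pi))⁻¹
  have he : (fun x : ℝ => (Real.sqrt (2 * Real.pi))⁻¹ * Real.exp (-(1/2) * x ^ 2))
      = stdNormalPDF := by
    funext x
    rw [stdNormalPDF, show -(1/2 : ℝ) * x ^ 2 = -x ^ 2 / 2 by ring]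
  rwa [he] at h

lemma integrable_id_mul_stdNormalPDF : Integrable (fun s => s * stdNormalPDF s) := by
  have h := (integrable_rpow_mul_exp_neg_mul_sq (by norm_num : (0:ℝ) < 1/2)
    (by norm_num : (-1:ℝ) < 1)).const_mul (Real.sqrt (2 * Real.pi))⁻¹
  have he : (fun x : ℝ => (Real.sqrt (2 * Real.pi))⁻¹ * (x ^ (1:ℝ) * Real.exp (-(1/2) * x ^ 2)))
      = fun s => s * stdNormalPDF s := by
    funext x
    rw [Real.rpow_one, stdNormalPDF, show -(1/2 : ℝ) * x ^ 2 = -x ^ 2 / 2 by ring]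
    ring
  rwa [he] at h

lemma hasDerivAt_neg_stdNormalPDF (x : ℝ) :
    HasDerivAt (fun s => -stdNormalPDF s) (x * stdNormalPDF x) x := by
  have h1 : HasDerivAt (fun s : ℝ => -s ^ 2 / 2) (-x) x := by
    exact ((hasDerivAt_pow 2 x).neg.div_const 2).congr_deriv (by norm_num; ring)
  have h2 := (h1.exp.const_mul (Real.sqrt (2 * Real.pi))⁻¹).neg
  have hx : x * stdNormalPDF x
      = -((Real.sqrt (2 * Real.pi))⁻¹ * (Real.exp (-x ^ 2 / 2) * -x)) := by
    rw [stdNormalPDF]; ring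
  rw [hx]
  exact h2

lemma tendsto_stdNormalPDF_atBot :
    Filter.Tendsto stdNormalPDF Filter.atBot (nhds 0) := by
  have hsq : Filter.Tendsto (fun s : ℝ => s ^ 2) Filter.atBot Filter.atTop := by
    have h : Filter.Tendsto (fun s : ℝ => (-s) ^ 2) Filter.atBot Filter.atTop :=
      (Filter.tendsto_pow_atTop two_ne_zero).comp Filter.tendsto_neg_atBot_atTop
    simpa [neg_sq] using h
  have h1 : Filter.Tendsto (fun s : ℝ => -s ^ 2 / 2) Filter.atBot Filter.atBot :=
    (Filter.tendsto_neg_atTop_atBot.comp hsq).atBot_div_const two_pos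
  have h2 := (Real.tendsto_exp_atBot.comp h1).const_mul (Real.sqrt (2 * Real.pi))⁻¹
  rw [show stdNormalPDF = fun s => (Real.sqrt (2 * Real.pi))⁻¹ * Real.exp (-s ^ 2 / 2) from rfl]
  simpa using h2

lemma integral_Iic_id_mul_stdNormalPDF (t : ℝ) :
    ∫ s in Set.Iic t, s * stdNormalPDF s = -stdNormalPDF t := by
  have h := MeasureTheory.integral_Iic_of_hasDerivAt_of_tendsto
    (f := fun s => -stdNormalPDF s) (f' := fun s => s * stdNormalPDF s) (a := t) (m := 0)
    ((hasDerivAt_neg_stdNormalPDF t).continuousAt.continuousWithinAt)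
    (fun x _ => hasDerivAt_neg_stdNormalPDF x)
    integrable_id_mul_stdNormalPDF.integrableOn
    (by simpa using tendsto_stdNormalPDF_atBot.neg)
  simpa using h

lemma stdNormalPDF_neg (x : ℝ) : stdNormalPDF (-x) = stdNormalPDF x := by
  simp [stdNormalPDF]

lemma integral_Iic_affine_mul_stdNormalPDF (m b t : ℝ) :
    ∫ s in Set.Iic t, (m + b * s) * stdNormalPDF s
      = m * stdNormalCDF t - b * stdNormalPDF t := by
  have h1 : IntegrableOn (fun s => m * stdNormalPDF s) (Set.Iic t) :=
    (integrable_stdNormalPDF.const_mul m).integrableOn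
  have h2 : IntegrableOn (fun s => b * (s * stdNormalPDF s)) (Set.Iic t) :=
    (integrable_id_mul_stdNormalPDF.const_mul b).integrableOn
  have he : (fun s => (m + b * s) * stdNormalPDF s)
      = fun s => m * stdNormalPDF s + b * (s * stdNormalPDF s) := by
    funext s; ring
  rw [he, MeasureTheory.integral_add h1 h2, MeasureTheory.integral_const_mul,
    MeasureTheory.integral_const_mul, integral_Iic_id_mul_stdNormalPDF]
  have hc : ∫ s in Set.Iic t, stdNormalPDF s = stdNormalCDF t := rfl
  rw [hc]; ring

lemma integral_comp_affine (g : ℝ → ℝ) (m b : ℝ) (hb : b ≠ 0) :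
    ∫ x, g x = |b| * ∫ s, g (m + b * s) := by
  have h1 : ∫ s, g (m + b * s) = |b⁻¹| • ∫ u, g (m + u) :=
    MeasureTheory.Measure.integral_comp_mul_left (fun u => g (m + u)) b
  have h2 : ∫ u, g (m + u) = ∫ x, g x :=
    MeasureTheory.integral_add_left_eq_self g m
  rw [h1, h2, smul_eq_mul, abs_inv, ← mul_assoc, mul_inv_cancel₀ (abs_ne_zero.2 hb), one_mul]

lemma setIntegral_Ici_comp_affine (F : ℝ → ℝ) {m b c γ : ℝ} (hb : b < 0)
    (hc : m + b * γ = c) :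
    ∫ x in Set.Ici c, F x = |b| * ∫ s in Set.Iic γ, F (m + b * s) := by
  rw [← MeasureTheory.integral_indicator measurableSet_Ici,
    ← MeasureTheory.integral_indicator measurableSet_Iic,
    integral_comp_affine (Set.indicator (Set.Ici c) F) m b hb.ne]
  congr 1
  refine MeasureTheory.integral_congr_ae (Filter.Eventually.of_forall fun s => ?_)
  by_cases h : s ≤ γ
  · have hm : m + b * s ∈ Set.Ici c := by rw [Set.mem_Ici, ← hc]; nlinarith
    simp only [Set.indicator_of_mem (Set.mem_Iic.mpr h), Set.indicator_of_mem hm]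
  · have hm : m + b * s ∉ Set.Ici c := by
      rw [Set.mem_Ici, ← hc]; push_neg at h ⊢; nlinarith
    simp only [Set.indicator_of_notMem (fun hm' => h (Set.mem_Iic.mp hm')),
      Set.indicator_of_notMem hm]
lemma setIntegral_Iic_comp_affine (F : ℝ → ℝ) {m b c γ : ℝ} (hb : 0 < b)
    (hc : m + b * γ = c) :
    ∫ x in Set.Iic c, F x = b * ∫ s in Set.Iic γ, F (m + b * s) := by
  rw [← MeasureTheory.integral_indicator measurableSet_Iic,
    ← MeasureTheory.integral_indicator measurableSet_Iic,
    integral_comp_affine (Set.indicator (Set.Iic c) F) m b hb.ne', abs_of_pos hb]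
  congr 1
  refine MeasureTheory.integral_congr_ae (Filter.Eventually.of_forall fun s => ?_)
  by_cases h : s ≤ γ
  · have hm : m + b * s ∈ Set.Iic c := by rw [Set.mem_Iic, ← hc]; nlinarith
    simp only [Set.indicator_of_mem (Set.mem_Iic.mpr h), Set.indicator_of_mem hm]
  · have hm : m + b * s ∉ Set.Iic c := by
      rw [Set.mem_Iic, ← hc]; push_neg at h ⊢; nlinarith
    simp only [Set.indicator_of_notMem (fun hm' => h (Set.mem_Iic.mp hm')),
      Set.indicator_of_notMem hm]

lemma coe_toNNReal_sq (β : ℝ) : ((Real.toNNReal (β ^ 2) : ℝ≥0) : ℝ) = β ^ 2 :=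
  Real.coe_toNNReal _ (sq_nonneg β)

lemma gaussianPDFReal_affine {β : ℝ} (hβ : 0 < β) (m s b : ℝ) (hb : b ^ 2 = β ^ 2) :
    gaussianPDFReal m (Real.toNNReal (β ^ 2)) (m + b * s) = β⁻¹ * stdNormalPDF s := by
  rw [gaussianPDFReal, stdNormalPDF, coe_toNNReal_sq]
  have hsqrt : Real.sqrt (2 * Real.pi * β ^ 2) = Real.sqrt (2 * Real.pi) * β := by
    rw [Real.sqrt_mul (by positivity), Real.sqrt_sq hβ.le]
  have harg : -(m + b * s - m) ^ 2 / (2 * β ^ 2) = -s ^ 2 / 2 := by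
    have : (m + b * s - m) ^ 2 = β ^ 2 * s ^ 2 := by rw [show m + b*s - m = b*s by ring]; nlinarith
    rw [this]
    field_simp
  rw [hsqrt, harg, mul_inv]
  ring

lemma gaussianPDFReal_mul_exp {β : ℝ} (hβ : 0 < β) (α x : ℝ) :
    gaussianPDFReal α (Real.toNNReal (β ^ 2)) x * Real.exp x
      = Real.exp (α + β ^ 2 / 2) * gaussianPDFReal (α + β ^ 2) (Real.toNNReal (β ^ 2)) x := by
  have hβ2 : β ^ 2 ≠ 0 := by positivity
  have key : -(x - α) ^ 2 / (2 * β ^ 2) + x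
      = (α + β ^ 2 / 2) + -(x - (α + β ^ 2)) ^ 2 / (2 * β ^ 2) := by
    field_simp
    ring
  rw [gaussianPDFReal, gaussianPDFReal, coe_toNNReal_sq, mul_assoc, ← Real.exp_add, key,
    Real.exp_add]
  ring

lemma setIntegral_gaussianReal (α' : ℝ) {v : ℝ≥0} (hv : v ≠ 0) (f : ℝ → ℝ) {S : Set ℝ}
    (hS : MeasurableSet S) :
    ∫ x in S, f x ∂(gaussianReal α' v) = ∫ x in S, gaussianPDFReal α' v x * f x := by
  rw [gaussianReal_of_var_ne_zero _ hv, MeasureTheory.restrict_withDensity hS,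
    show (gaussianPDF α' v) = fun x => ((fun y => (gaussianPDFReal α' v y).toNNReal) x : ℝ≥0∞)
      from rfl,
    integral_withDensity_eq_integral_smul ((measurable_gaussianPDFReal α' v).real_toNNReal)]
  refine MeasureTheory.integral_congr_ae (Filter.Eventually.of_forall fun x => ?_)
  simp [NNReal.smul_def, Real.coe_toNNReal _ (gaussianPDFReal_nonneg α' v x)]

/-- If `μ` is the Gaussian measure with mean `α` and variance `β²` (`β > 0`), `K > 0`,
`ρ ∈ {1, −1}` and `γ = (α + β² − ln K)/β`, then
`∫_{{ω : ρ·e^ω ≥ ρ·K}} ω·e^ω dμ(ω) = e^{α + β²/2}·((α + β²)·Φ(ργ) + ρβ·φ(γ))`. -/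
theorem gaussian_integral_id_mul_exp_on_event (α β K ρ γ : ℝ) (hβ : 0 < β) (hK : 0 < K)
    (hρ : ρ = 1 ∨ ρ = -1) (hγ : γ = (α + β ^ 2 - Real.log K) / β) :
    ∫ ω in {ω : ℝ | ρ * Real.exp ω ≥ ρ * K}, ω * Real.exp ω
        ∂(gaussianReal α (Real.toNNReal (β ^ 2)))
      = Real.exp (α + β ^ 2 / 2) *
          ((α + β ^ 2) * stdNormalCDF (ρ * γ) + ρ * β * stdNormalPDF γ) := by
  have hv : Real.toNNReal (β ^ 2) ≠ 0 := (Real.toNNReal_pos.mpr (by positivity)).ne'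
  have hβγ : β * γ = α + β ^ 2 - Real.log K := by
    rw [hγ]; field_simp
  have hkey : ∀ x : ℝ,
      gaussianPDFReal α (Real.toNNReal (β ^ 2)) x * (x * Real.exp x)
        = Real.exp (α + β ^ 2 / 2)
            * (x * gaussianPDFReal (α + β ^ 2) (Real.toNNReal (β ^ 2)) x) := by
    intro x
    rw [show gaussianPDFReal α (Real.toNNReal (β ^ 2)) x * (x * Real.exp x)
        = (gaussianPDFReal α (Real.toNNReal (β ^ 2)) x * Real.exp x) * x by ring,
      gaussianPDFReal_mul_exp hβ]
    ring
  rcases hρ with hρ1 | hρ1 <;> subst hρ1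
  · -- ρ = 1
    have hset : {ω : ℝ | 1 * Real.exp ω ≥ 1 * K} = Set.Ici (Real.log K) := by
      ext ω
      simp only [Set.mem_setOf_eq, one_mul, ge_iff_le, Set.mem_Ici]
      exact (Real.log_le_iff_le_exp hK).symm
    rw [hset, setIntegral_gaussianReal α hv _ measurableSet_Ici]
    rw [MeasureTheory.integral_congr_ae (Filter.Eventually.of_forall fun x => hkey x),
      MeasureTheory.integral_const_mul]
    rw [setIntegral_Ici_comp_affine (fun x => x * gaussianPDFReal (α + β ^ 2)
        (Real.toNNReal (β ^ 2)) x) (neg_neg_iff_pos.mpr hβ : -β < 0)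
        (show (α + β ^ 2) + (-β) * γ = Real.log K by linarith)]
    have hpt : ∀ s : ℝ, ((α + β ^ 2) + (-β) * s) * gaussianPDFReal (α + β ^ 2)
        (Real.toNNReal (β ^ 2)) ((α + β ^ 2) + (-β) * s)
        = β⁻¹ * (((α + β ^ 2) + (-β) * s) * stdNormalPDF s) := by
      intro s
      rw [gaussianPDFReal_affine hβ _ s (-β) (by ring)]
      ring
    rw [MeasureTheory.integral_congr_ae (Filter.Eventually.of_forall fun s => hpt s),
      MeasureTheory.integral_const_mul, integral_Iic_affine_mul_stdNormalPDF]
    rw [abs_neg, abs_of_pos hβ]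
    rw [one_mul, one_mul]
    field_simp
    ring
  · -- ρ = -1
    have hset : {ω : ℝ | -1 * Real.exp ω ≥ -1 * K} = Set.Iic (Real.log K) := by
      ext ω
      simp only [Set.mem_setOf_eq, neg_one_mul, ge_iff_le, Set.mem_Iic, neg_le_neg_iff]
      exact (Real.le_log_iff_exp_le hK).symm
    rw [hset, setIntegral_gaussianReal α hv _ measurableSet_Iic]
    rw [MeasureTheory.integral_congr_ae (Filter.Eventually.of_forall fun x => hkey x),
      MeasureTheory.integral_const_mul]
    rw [setIntegral_Iic_comp_affine (fun x => x * gaussianPDFReal (α + β ^ 2)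
        (Real.toNNReal (β ^ 2)) x) hβ
        (show (α + β ^ 2) + β * (-γ) = Real.log K by linarith)]
    have hpt : ∀ s : ℝ, ((α + β ^ 2) + β * s) * gaussianPDFReal (α + β ^ 2)
        (Real.toNNReal (β ^ 2)) ((α + β ^ 2) + β * s)
        = β⁻¹ * (((α + β ^ 2) + β * s) * stdNormalPDF s) := by
      intro s
      rw [gaussianPDFReal_affine hβ _ s β rfl]
      ring
    rw [MeasureTheory.integral_congr_ae (Filter.Eventually.of_forall fun s => hpt s),
      MeasureTheory.integral_const_mul, integral_Iic_affine_mul_stdNormalPDF]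
    rw [show (-1 : ℝ) * γ = -γ by ring, stdNormalPDF_neg]
    field_simp
    ring
end

section
/- Let T > 0, r > q ≥ 0, σ > 0, h ∈ ℝ, and let G ∈ (0,1) be the unique solution of ln G = qT/G − rT. With α^g(t,u,x) = (t/u)·ln x − ((u² − t²)/(2u))·(r − q + σ²/2) and β^g(t,u) = (σ/(u·√3))·√(u³ − t³), define v̂(t,x) = −e^{−q(T−t)} · e^{α^g(t,T,x) + β^g(t,T)²/2} · Φ(−α^g(t,T,x)/β^g(t,T) − β^g(t,T)) · (t/(T·x)) for 0 < t < T and x > 0. Then lim_{τ→0⁺} (1 + v̂(T−τ, G·(1 + hσ·√τ)))/τ = q/G + 1/T. -/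
open MeasureTheory Real Filter Topology

/-- `α^g(t,u,x) = (t/u)·ln x − ((u²−t²)/(2u))·(r−q+σ²/2)`. -/
noncomputable def alphaG (r q σ t u x : ℝ) : ℝ :=
  (t / u) * Real.log x - ((u ^ 2 - t ^ 2) / (2 * u)) * (r - q + σ ^ 2 / 2)

/-- `β^g(t,u) = (σ/(u√3))·√(u³−t³)`. -/
noncomputable def betaG (σ t u : ℝ) : ℝ :=
  (σ / (u * Real.sqrt 3)) * Real.sqrt (u ^ 3 - t ^ 3)

/-- `v̂(t,x) = −e^{−q(T−t)}·e^{α^g(t,T,x)+β^g(t,T)²/2}·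
     Φ(−α^g(t,T,x)/β^g(t,T) − β^g(t,T))·(t/(T·x))`. -/
noncomputable def vHatG (r q σ T t x : ℝ) : ℝ :=
  -Real.exp (-q * (T - t)) * Real.exp (alphaG r q σ t T x + (betaG σ t T) ^ 2 / 2)
    * stdNormalCDF (-(alphaG r q σ t T x) / betaG σ t T - betaG σ t T)
    * (t / (T * x))

lemma myGaussEq : (fun s : ℝ => (Real.sqrt (2 * Real.pi))⁻¹ * Real.exp (-s ^ 2 / 2))
    = fun s : ℝ => (Real.sqrt (2 * Real.pi))⁻¹ * Real.exp (-(1/2 : ℝ) * s ^ 2) := by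
  funext s; congr 1; ring_nf

lemma myGaussIntegrable :
    Integrable (fun s : ℝ => (Real.sqrt (2 * Real.pi))⁻¹ * Real.exp (-s ^ 2 / 2)) := by
  rw [myGaussEq]
  exact (integrable_exp_neg_mul_sq (by norm_num)).const_mul _

lemma myGaussTotal :
    ∫ s : ℝ, (Real.sqrt (2 * Real.pi))⁻¹ * Real.exp (-s ^ 2 / 2) = 1 := by
  rw [myGaussEq]
  rw [integral_const_mul, integral_gaussian]
  rw [show (π / (1/2 : ℝ)) = 2 * π by ring]
  exact inv_mul_cancel₀ (ne_of_gt (Real.sqrt_pos.2 (by positivity)))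

lemma myCDF_le_one (y : ℝ) : stdNormalCDF y ≤ 1 := by
  rw [← myGaussTotal]
  exact setIntegral_le_integral myGaussIntegrable (ae_of_all _ fun s => by positivity)

lemma myTail {w : ℝ} (hw : 1 ≤ w) : 1 - stdNormalCDF w ≤ 2 * Real.exp (-w / 2) := by
  have hsplit : stdNormalCDF w
      + ∫ s in Set.Ioi w, (Real.sqrt (2 * Real.pi))⁻¹ * Real.exp (-s ^ 2 / 2) = 1 := by
    rw [stdNormalCDF, intervalIntegral.integral_Iic_add_Ioi myGaussIntegrable.integrableOn
      myGaussIntegrable.integrableOn, myGaussTotal]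
  have hbound : (∫ s in Set.Ioi w, (Real.sqrt (2 * Real.pi))⁻¹ * Real.exp (-s ^ 2 / 2))
      ≤ ∫ s in Set.Ioi w, Real.exp (-(2⁻¹ : ℝ) * s) := by
    refine setIntegral_mono_on myGaussIntegrable.integrableOn
      (exp_neg_integrableOn_Ioi w (by norm_num)) measurableSet_Ioi fun s hs => ?_
    have hs1 : (1 : ℝ) ≤ s := hw.trans (le_of_lt hs)
    have h1 : (Real.sqrt (2 * Real.pi))⁻¹ ≤ 1 := by
      rw [inv_le_one_iff₀]
      right
      rw [show (1:ℝ) = Real.sqrt 1 by simp]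
      exact Real.sqrt_le_sqrt (by nlinarith [Real.pi_gt_three])
    calc (Real.sqrt (2 * Real.pi))⁻¹ * Real.exp (-s ^ 2 / 2)
        ≤ 1 * Real.exp (-(2⁻¹ : ℝ) * s) := by
          apply mul_le_mul h1 (Real.exp_le_exp.2 (by nlinarith)) (le_of_lt (Real.exp_pos _))
            (by norm_num)
      _ = Real.exp (-(2⁻¹ : ℝ) * s) := one_mul _
  have hcalc : (∫ s in Set.Ioi w, Real.exp (-(2⁻¹ : ℝ) * s)) = 2 * Real.exp (-w / 2) := by
    have hderiv : ∀ x ∈ Set.Ici w,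
        HasDerivAt (fun s : ℝ => -2 * Real.exp (-(2⁻¹ : ℝ) * s)) (Real.exp (-(2⁻¹ : ℝ) * x)) x := by
      intro x _
      have h1 : HasDerivAt (fun s : ℝ => -(2⁻¹ : ℝ) * s) (-(2⁻¹ : ℝ)) x := by
        simpa using (hasDerivAt_id x).const_mul (-(2⁻¹ : ℝ))
      have h2 := (h1.exp).const_mul (-2 : ℝ)
      exact h2.congr_deriv (by ring)
    have htend : Tendsto (fun s : ℝ => -2 * Real.exp (-(2⁻¹ : ℝ) * s)) atTop (𝓝 0) := by
      have h3 : Tendsto (fun s : ℝ => -(2⁻¹ : ℝ) * s) atTop atBot :=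
        tendsto_id.const_mul_atTop_of_neg (by norm_num)
      have h4 := ((Real.tendsto_exp_atBot).comp h3).const_mul (-2 : ℝ)
      simpa using h4
    rw [integral_Ioi_of_hasDerivAt_of_tendsto' hderiv
      (exp_neg_integrableOn_Ioi w (by norm_num)) htend]
    rw [show -w / 2 = -(2⁻¹:ℝ) * w by ring]
    ring
  linarith [hbound, hcalc ▸ hbound]

noncomputable def myX (G h σ τ : ℝ) : ℝ := G * (1 + h * σ * Real.sqrt τ)
noncomputable def myA (r q σ T G h τ : ℝ) : ℝ := alphaG r q σ (T - τ) T (myX G h σ τ)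
noncomputable def myB (σ T τ : ℝ) : ℝ := betaG σ (T - τ) T
noncomputable def myM (r q σ T G h τ : ℝ) : ℝ :=
  -q * τ + myA r q σ T G h τ + (myB σ T τ) ^ 2 / 2 + Real.log ((T - τ) / (T * myX G h σ τ))

set_option maxHeartbeats 1000000 in
/-- With `G ∈ (0,1)` the unique root of `ln G = qT/G − rT`,
`lim_{τ→0⁺} (1 + v̂(T−τ, G(1+hσ√τ)))/τ = q/G + 1/T`. -/
theorem tendsto_one_add_vHatG_div_tau (r q σ T G h : ℝ) (hσ : 0 < σ) (hT : 0 < T)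
    (hq : 0 ≤ q) (hrq : q < r) (hG0 : 0 < G) (hG1 : G < 1)
    (hGeq : Real.log G = q * T / G - r * T) :
    Tendsto (fun τ : ℝ =>
        (1 + vHatG r q σ T (T - τ) (G * (1 + h * σ * Real.sqrt τ))) / τ)
      (𝓝[>] 0) (𝓝 (q / G + 1 / T)) := by
  have hl3 : (0:ℝ) < Real.sqrt 3 := by positivity
  set l := 𝓝[>] (0:ℝ) with hldef
  set c : ℝ := r - q + σ ^ 2 / 2 with hcdef
  -- eventual positivity facts
  have hev1 : ∀ᶠ τ in l, 0 < τ := self_mem_nhdsWithin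
  have hevT : ∀ᶠ τ in l, τ < T / 2 :=
    nhdsWithin_le_nhds (Filter.Tendsto.eventually_lt_const (by positivity) tendsto_id)
  have hid0 : Tendsto (fun τ : ℝ => τ) l (𝓝 0) :=
    (continuous_id.tendsto 0).mono_left nhdsWithin_le_nhds
  have hsq0 : Tendsto (fun τ : ℝ => Real.sqrt τ) l (𝓝 0) := by
    have := (Real.continuous_sqrt.tendsto 0).mono_left (nhdsWithin_le_nhds (s := Set.Ioi 0))
    simpa using this
  have hε : Tendsto (fun τ : ℝ => h * σ * Real.sqrt τ) l (𝓝 0) := by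
    simpa using hsq0.const_mul (h * σ)
  have hevε : ∀ᶠ τ in l, |h * σ * Real.sqrt τ| < 1/2 := by
    have := hε.eventually (eventually_abs_sub_lt 0 (by norm_num : (0:ℝ) < 1/2))
    simpa using this
  have hevx : ∀ᶠ τ in l, 0 < 1 + h * σ * Real.sqrt τ := by
    filter_upwards [hevε] with τ hτ
    have := abs_lt.1 hτ
    linarith [this.1]
  -- limit of x
  have hxG : Tendsto (fun τ : ℝ => myX G h σ τ) l (𝓝 G) := by
    have : Tendsto (fun τ : ℝ => G * (1 + h * σ * Real.sqrt τ)) l (𝓝 (G * (1 + 0))) :=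
      (tendsto_const_nhds.add hε).const_mul G
    simpa [myX] using this
  -- limit of A
  have hAtend : Tendsto (fun τ : ℝ => myA r q σ T G h τ) l (𝓝 (Real.log G)) := by
    have hlogx : Tendsto (fun τ : ℝ => Real.log (myX G h σ τ)) l (𝓝 (Real.log G)) :=
      ((Real.continuousAt_log (ne_of_gt hG0)).tendsto).comp hxG
    have h1 : Tendsto (fun τ : ℝ => (T - τ) / T) l (𝓝 1) := by
      have : Tendsto (fun τ : ℝ => (T - τ) / T) l (𝓝 ((T - 0) / T)) :=
        ((tendsto_const_nhds.sub hid0).div_const T)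
      simpa [div_self hT.ne'] using this
    have h2 : Tendsto (fun τ : ℝ => (T ^ 2 - (T - τ) ^ 2) / (2 * T)) l (𝓝 0) := by
      have : Tendsto (fun τ : ℝ => (T ^ 2 - (T - τ) ^ 2) / (2 * T)) l
          (𝓝 ((T ^ 2 - (T - 0) ^ 2) / (2 * T))) :=
        ((tendsto_const_nhds.sub ((tendsto_const_nhds.sub hid0).pow 2)).div_const (2 * T))
      simpa using this
    have := (h1.mul hlogx).sub (h2.mul_const c)
    simpa [myA, alphaG, ← hcdef] using this
  have halog : Real.log G < 0 := Real.log_neg hG0 hG1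
  -- limit of B and positivity
  have hBtend : Tendsto (fun τ : ℝ => myB σ T τ) l (𝓝 0) := by
    have hin : Tendsto (fun τ : ℝ => T ^ 3 - (T - τ) ^ 3) l (𝓝 0) := by
      have : Tendsto (fun τ : ℝ => T ^ 3 - (T - τ) ^ 3) l (𝓝 (T ^ 3 - (T - 0) ^ 3)) :=
        tendsto_const_nhds.sub ((tendsto_const_nhds.sub hid0).pow 3)
      simpa using this
    have := ((Real.continuous_sqrt.tendsto 0).comp hin).const_mul (σ / (T * Real.sqrt 3))
    simpa [myB, betaG] using this
  have hBpos : ∀ᶠ τ in l, 0 < myB σ T τ := by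
    filter_upwards [hev1, hevT] with τ h1 h2
    have hTτ' : 0 < T - τ := by linarith
    have hcube : 0 < T ^ 3 - (T - τ) ^ 3 := by
      nlinarith [mul_pos (mul_pos h1 hT) hTτ', mul_pos (mul_pos h1 h1) h1]
    exact mul_pos (div_pos hσ (mul_pos hT hl3)) (Real.sqrt_pos.2 hcube)
  have hBle : ∀ᶠ τ in l, myB σ T τ ≤ σ * Real.sqrt τ := by
    filter_upwards [hev1, hevT] with τ h1 h2
    have hle : T ^ 3 - (T - τ) ^ 3 ≤ 3 * T ^ 2 * τ := by
      nlinarith [mul_nonneg (mul_nonneg h1.le h1.le) (by linarith : (0:ℝ) ≤ 3 * T - τ)]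
    have hs : Real.sqrt (T ^ 3 - (T - τ) ^ 3) ≤ Real.sqrt (3 * T ^ 2 * τ) :=
      Real.sqrt_le_sqrt hle
    have heq : Real.sqrt (3 * T ^ 2 * τ) = Real.sqrt 3 * T * Real.sqrt τ := by
      rw [Real.sqrt_mul (by positivity), Real.sqrt_mul (by norm_num), Real.sqrt_sq hT.le]
    have : myB σ T τ ≤ σ / (T * Real.sqrt 3) * (Real.sqrt 3 * T * Real.sqrt τ) := by
      rw [myB, betaG, ← heq]
      exact mul_le_mul_of_nonneg_left hs (by positivity)
    calc myB σ T τ ≤ σ / (T * Real.sqrt 3) * (Real.sqrt 3 * T * Real.sqrt τ) := this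
      _ = σ * Real.sqrt τ := by field_simp
  -- key identity for M/τ
  have hMeq : ∀ᶠ τ in l, myM r q σ T G h τ / τ =
      -q - (Real.log G + Real.log (1 + h * σ * Real.sqrt τ)) / T
      - ((2 * T - τ) / (2 * T)) * c
      + σ ^ 2 * (3 * T ^ 2 - 3 * T * τ + τ ^ 2) / (6 * T ^ 2)
      + Real.log (1 - τ / T) / τ := by
    filter_upwards [hev1, hevT, hevx] with τ h1 h2 h3
    have hTτ : 0 < T - τ := by linarith
    have h1T : 0 < 1 - τ / T := by
      rw [sub_pos, div_lt_one hT]; linarith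
    have hxpos : 0 < myX G h σ τ := mul_pos hG0 h3
    have hcube : (0:ℝ) ≤ T ^ 3 - (T - τ) ^ 3 := by
      nlinarith [mul_pos (mul_pos h1 hT) hTτ, mul_pos (mul_pos h1 h1) h1]
    have hlogx : Real.log (myX G h σ τ) = Real.log G + Real.log (1 + h * σ * Real.sqrt τ) :=
      Real.log_mul hG0.ne' h3.ne'
    have hlogq : Real.log ((T - τ) / (T * myX G h σ τ))
        = Real.log (1 - τ / T) - (Real.log G + Real.log (1 + h * σ * Real.sqrt τ)) := by
      have hrw : (T - τ) / (T * myX G h σ τ) = (1 - τ / T) / myX G h σ τ := by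
        field_simp
      rw [hrw, Real.log_div h1T.ne' hxpos.ne', hlogx]
    have hBsq : (myB σ T τ) ^ 2 = σ ^ 2 / (T ^ 2 * 3) * (T ^ 3 - (T - τ) ^ 3) := by
      rw [myB, betaG, mul_pow, div_pow, mul_pow, Real.sq_sqrt hcube,
        Real.sq_sqrt (by norm_num : (0:ℝ) ≤ 3)]
    rw [myM, myA, alphaG, hBsq, hlogq, hlogx]
    field_simp
    ring
  -- limit of M/τ
  have hlog1 : Tendsto (fun τ : ℝ => Real.log (1 + h * σ * Real.sqrt τ)) l (𝓝 0) := by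
    have h0 : Tendsto (fun τ : ℝ => 1 + h * σ * Real.sqrt τ) l (𝓝 1) := by
      simpa using tendsto_const_nhds.add hε
    have := ((Real.continuousAt_log (by norm_num : (1:ℝ) ≠ 0)).tendsto).comp h0
    simpa [Function.comp_def] using this
  have hslopelog : Tendsto (fun τ : ℝ => Real.log (1 - τ / T) / τ) l (𝓝 (-1 / T)) := by
    have hd0 : HasDerivAt (fun τ : ℝ => 1 - τ / T) (-(1 / T)) 0 := by
      simpa using ((hasDerivAt_id (0:ℝ)).div_const T).const_sub 1
    have hd : HasDerivAt (fun τ : ℝ => Real.log (1 - τ / T)) (-1 / T) 0 := by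
      have := hd0.log (by norm_num : (1:ℝ) - 0 / T ≠ 0)
      simp only [zero_div, sub_zero, div_one] at this
      convert this using 1
      field_simp
    rw [hasDerivAt_iff_tendsto_slope] at hd
    have hmono : l ≤ 𝓝[≠] (0:ℝ) :=
      nhdsWithin_mono 0 (fun y hy => ne_of_gt hy)
    exact (hd.mono_left hmono).congr (fun τ => by rw [slope_def_field]; simp)
  -- limit of M/τ
  have t1 : Tendsto (fun τ : ℝ => -q - (Real.log G + Real.log (1 + h * σ * Real.sqrt τ)) / T) l
      (𝓝 (-q - (Real.log G + 0) / T)) :=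
    tendsto_const_nhds.sub ((tendsto_const_nhds.add hlog1).div_const T)
  have t2 : Tendsto (fun τ : ℝ => ((2 * T - τ) / (2 * T)) * c) l
      (𝓝 (((2 * T - 0) / (2 * T)) * c)) :=
    ((tendsto_const_nhds.sub hid0).div_const (2 * T)).mul_const c
  have t3 : Tendsto (fun τ : ℝ => σ ^ 2 * (3 * T ^ 2 - 3 * T * τ + τ ^ 2) / (6 * T ^ 2)) l
      (𝓝 (σ ^ 2 * (3 * T ^ 2 - 3 * T * 0 + 0 ^ 2) / (6 * T ^ 2))) := by
    have hin : Tendsto (fun τ : ℝ => 3 * T ^ 2 - 3 * T * τ + τ ^ 2) l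
        (𝓝 (3 * T ^ 2 - 3 * T * 0 + 0 ^ 2)) :=
      (tendsto_const_nhds.sub (hid0.const_mul (3 * T))).add (hid0.pow 2)
    exact (hin.const_mul (σ ^ 2)).div_const (6 * T ^ 2)
  have hMdiv : Tendsto (fun τ : ℝ => myM r q σ T G h τ / τ) l (𝓝 (-(q / G + 1 / T))) := by
    have hlim := ((((t1.sub t2).add t3).add hslopelog).congr'
      (hMeq.mono fun τ hh => hh.symm))
    convert hlim using 2
    rw [hGeq, hcdef]
    field_simp
    ring
  have hM0 : Tendsto (fun τ : ℝ => myM r q σ T G h τ) l (𝓝 0) := by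
    have h1 := hMdiv.mul hid0
    rw [mul_zero] at h1
    exact h1.congr' (hev1.mono fun τ hτ => div_mul_cancel₀ _ hτ.ne')
  have hKpos : 0 < q / G + 1 / T :=
    add_pos_of_nonneg_of_pos (div_nonneg hq hG0.le) (by positivity)
  have hMneg : ∀ᶠ τ in l, myM r q σ T G h τ < 0 := by
    have hlt : ∀ᶠ τ in l, myM r q σ T G h τ / τ < 0 :=
      hMdiv.eventually_lt_const (by linarith)
    filter_upwards [hlt, hev1] with τ ha hb
    have := mul_neg_of_neg_of_pos ha hb
    rwa [div_mul_cancel₀ _ hb.ne'] at this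
  -- limit of (1 - exp M)/τ
  have hE : Tendsto (fun τ : ℝ => (1 - Real.exp (myM r q σ T G h τ)) / τ) l
      (𝓝 (q / G + 1 / T)) := by
    have hMne : Tendsto (fun τ : ℝ => myM r q σ T G h τ) l (𝓝[≠] (0:ℝ)) :=
      tendsto_nhdsWithin_iff.2 ⟨hM0, hMneg.mono fun τ hh => by simp [hh.ne]⟩
    have hde := Real.hasDerivAt_exp 0
    rw [hasDerivAt_iff_tendsto_slope] at hde
    have hcomp := hde.comp hMne
    have hcomp' : Tendsto
        (fun τ : ℝ => (Real.exp (myM r q σ T G h τ) - 1) / (myM r q σ T G h τ)) l (𝓝 1) := by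
      have heq : ∀ τ : ℝ, slope Real.exp 0 (myM r q σ T G h τ)
          = (Real.exp (myM r q σ T G h τ) - 1) / (myM r q σ T G h τ) := by
        intro τ; rw [slope_def_field]; simp
      have := hcomp.congr heq
      simpa using this
    have hprod := (hcomp'.mul hMdiv).neg
    have heq2 : ∀ᶠ τ in l,
        -((Real.exp (myM r q σ T G h τ) - 1) / myM r q σ T G h τ * (myM r q σ T G h τ / τ))
        = (1 - Real.exp (myM r q σ T G h τ)) / τ := by
      filter_upwards [hMneg, hev1] with τ hM hτ
      have hstep : (Real.exp (myM r q σ T G h τ) - 1) / myM r q σ T G h τ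
          * (myM r q σ T G h τ / τ) = (Real.exp (myM r q σ T G h τ) - 1) / τ := by
        rw [div_mul_div_comm, mul_comm (myM r q σ T G h τ) τ,
          mul_div_mul_right _ _ hM.ne]
      rw [hstep, ← neg_div, neg_sub]
    have hfin := hprod.congr' heq2
    simpa only [one_mul, neg_neg] using hfin
  -- the tail term
  set a0 : ℝ := -Real.log G with ha0def
  have ha0 : 0 < a0 := by rw [ha0def]; linarith
  set c0 : ℝ := a0 / (4 * σ) with hc0def
  have hc0 : 0 < c0 := by rw [hc0def]; positivity
  have hAev : ∀ᶠ τ in l, myA r q σ T G h τ < -a0 / 2 :=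
    hAtend.eventually_lt_const (by rw [ha0def]; linarith)
  have hτsmall : ∀ᶠ τ in l, τ < a0 / (4 * σ ^ 2) :=
    hid0.eventually_lt_const (by positivity)
  have hτc0 : ∀ᶠ τ in l, τ < c0 ^ 2 := hid0.eventually_lt_const (by positivity)
  have hZ1 : ∀ᶠ τ in l, 1 ≤ c0 / Real.sqrt τ := by
    filter_upwards [hev1, hτc0] with τ h1 h2
    have hs : 0 < Real.sqrt τ := Real.sqrt_pos.2 h1
    have hsc : Real.sqrt τ ≤ c0 := by
      have := Real.sqrt_le_sqrt h2.le
      rwa [Real.sqrt_sq hc0.le] at this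
    rwa [le_div_iff₀ hs, one_mul]
  have hZ2 : ∀ᶠ τ in l,
      c0 / Real.sqrt τ ≤ -(myA r q σ T G h τ) / myB σ T τ - myB σ T τ := by
    filter_upwards [hev1, hAev, hBpos, hBle, hτsmall] with τ h1 hA hb hble hsm
    have hs : 0 < Real.sqrt τ := Real.sqrt_pos.2 h1
    have hσs : 0 < σ * Real.sqrt τ := by positivity
    have hA' : a0 / 2 ≤ -(myA r q σ T G h τ) := by linarith
    have hfrac : (a0 / 2) / (σ * Real.sqrt τ) ≤ -(myA r q σ T G h τ) / myB σ T τ :=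
      div_le_div₀ (by linarith) hA' hb hble
    have hb2 : myB σ T τ ≤ (a0 / 4) / (σ * Real.sqrt τ) := by
      rw [le_div_iff₀ hσs]
      have h1' : myB σ T τ * (σ * Real.sqrt τ) ≤ (σ * Real.sqrt τ) * (σ * Real.sqrt τ) :=
        mul_le_mul_of_nonneg_right hble hσs.le
      have hss : Real.sqrt τ * Real.sqrt τ = τ := Real.mul_self_sqrt h1.le
      have h2' : (σ * Real.sqrt τ) * (σ * Real.sqrt τ) = σ ^ 2 * τ := by
        rw [show (σ * Real.sqrt τ) * (σ * Real.sqrt τ) = σ^2 * (Real.sqrt τ * Real.sqrt τ) by ring,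
          hss]
      have h3' : σ ^ 2 * τ ≤ a0 / 4 := by
        rw [lt_div_iff₀ (by positivity : (0:ℝ) < 4 * σ ^ 2)] at hsm
        nlinarith
      rw [h2'] at h1'
      linarith
    have hkey0 : c0 / Real.sqrt τ
        = (a0 / 2) / (σ * Real.sqrt τ) - (a0 / 4) / (σ * Real.sqrt τ) := by
      rw [hc0def]; field_simp; ring
    linarith
  have htail0 : Tendsto (fun τ : ℝ =>
      (1 - stdNormalCDF (-(myA r q σ T G h τ) / myB σ T τ - myB σ T τ)) / τ) l (𝓝 0) := by
    have hlb : ∀ᶠ τ in l, 0 ≤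
        (1 - stdNormalCDF (-(myA r q σ T G h τ) / myB σ T τ - myB σ T τ)) / τ := by
      filter_upwards [hev1] with τ h1
      have hle1 := myCDF_le_one (-(myA r q σ T G h τ) / myB σ T τ - myB σ T τ)
      exact div_nonneg (by linarith) h1.le
    have hub : ∀ᶠ τ in l,
        (1 - stdNormalCDF (-(myA r q σ T G h τ) / myB σ T τ - myB σ T τ)) / τ
        ≤ 2 * Real.exp (-(c0 / Real.sqrt τ) / 2) / τ := by
      filter_upwards [hev1, hZ1, hZ2] with τ h1 hz1 hz2
      have hZw : (1:ℝ) ≤ -(myA r q σ T G h τ) / myB σ T τ - myB σ T τ := le_trans hz1 hz2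
      have ht := myTail hZw
      have hmono : Real.exp (-(-(myA r q σ T G h τ) / myB σ T τ - myB σ T τ) / 2)
          ≤ Real.exp (-(c0 / Real.sqrt τ) / 2) := Real.exp_le_exp.2 (by linarith)
      have hfin : 1 - stdNormalCDF (-(myA r q σ T G h τ) / myB σ T τ - myB σ T τ)
          ≤ 2 * Real.exp (-(c0 / Real.sqrt τ) / 2) := by linarith
      exact div_le_div_of_nonneg_right hfin h1.le |>.trans_eq rfl
    have hsq' : Tendsto (fun τ : ℝ => Real.sqrt τ) l (𝓝[>] (0:ℝ)) :=
      tendsto_nhdsWithin_iff.2 ⟨hsq0, hev1.mono fun τ h1 => Real.sqrt_pos.2 h1⟩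
    have hu : Tendsto (fun τ : ℝ => (Real.sqrt τ)⁻¹) l atTop :=
      tendsto_inv_nhdsGT_zero.comp hsq'
    have hpoly : Tendsto (fun u : ℝ =>
        (2 / (c0 / 2) ^ 2) * (((c0 / 2) * u) ^ 2 * Real.exp (-((c0 / 2) * u)))) atTop (𝓝 0) := by
      have hb := tendsto_pow_mul_exp_neg_atTop_nhds_zero 2
      have hlin : Tendsto (fun u : ℝ => (c0 / 2) * u) atTop atTop :=
        Tendsto.const_mul_atTop (by positivity) tendsto_id
      have hcomp := hb.comp hlin
      have := hcomp.const_mul (2 / (c0 / 2) ^ 2)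
      simpa [Function.comp] using this
    have hgeq : ∀ᶠ τ in l, 2 * Real.exp (-(c0 / Real.sqrt τ) / 2) / τ
        = (2 / (c0 / 2) ^ 2) * (((c0 / 2) * (Real.sqrt τ)⁻¹) ^ 2
          * Real.exp (-((c0 / 2) * (Real.sqrt τ)⁻¹))) := by
      filter_upwards [hev1] with τ h1
      obtain ⟨s, hs0, rfl⟩ : ∃ s : ℝ, 0 < s ∧ s ^ 2 = τ :=
        ⟨Real.sqrt τ, Real.sqrt_pos.2 h1, Real.sq_sqrt h1.le⟩
      rw [Real.sqrt_sq hs0.le]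
      rw [show -(c0 / s) / 2 = -((c0 / 2) * s⁻¹) by ring]
      field_simp
    have hg : Tendsto (fun τ : ℝ => 2 * Real.exp (-(c0 / Real.sqrt τ) / 2) / τ) l (𝓝 0) :=
      (hpoly.comp hu).congr' (hgeq.mono fun τ hh => hh.symm)
    exact squeeze_zero' hlb hub hg
  have hexpM : Tendsto (fun τ : ℝ => Real.exp (myM r q σ T G h τ)) l (𝓝 1) := by
    have := (Real.continuous_exp.tendsto 0).comp hM0
    simpa [Function.comp_def] using this
  -- assembly
  have hsum := hE.add (hexpM.mul htail0)
  have hkey : ∀ᶠ τ in l,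
      (1 - Real.exp (myM r q σ T G h τ)) / τ
        + Real.exp (myM r q σ T G h τ)
          * ((1 - stdNormalCDF (-(myA r q σ T G h τ) / myB σ T τ - myB σ T τ)) / τ)
      = (1 + vHatG r q σ T (T - τ) (G * (1 + h * σ * Real.sqrt τ))) / τ := by
    filter_upwards [hev1, hevT, hevx] with τ h1 h2 h3
    have hTτ : 0 < T - τ := by linarith
    have hxpos : 0 < myX G h σ τ := mul_pos hG0 h3
    have hratio : 0 < (T - τ) / (T * myX G h σ τ) := div_pos hTτ (by positivity)
    have hPM : Real.exp (myM r q σ T G h τ)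
        = Real.exp (-q * τ) * Real.exp (myA r q σ T G h τ + (myB σ T τ) ^ 2 / 2)
          * ((T - τ) / (T * myX G h σ τ)) := by
      rw [myM, show -q * τ + myA r q σ T G h τ + (myB σ T τ) ^ 2 / 2
            + Real.log ((T - τ) / (T * myX G h σ τ))
          = (-q * τ + (myA r q σ T G h τ + (myB σ T τ) ^ 2 / 2))
            + Real.log ((T - τ) / (T * myX G h σ τ)) by ring,
        Real.exp_add, Real.exp_add, Real.exp_log hratio]
    have hv : vHatG r q σ T (T - τ) (G * (1 + h * σ * Real.sqrt τ))
        = -Real.exp (-q * τ) * Real.exp (myA r q σ T G h τ + (myB σ T τ) ^ 2 / 2)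
          * stdNormalCDF (-(myA r q σ T G h τ) / myB σ T τ - myB σ T τ)
          * ((T - τ) / (T * myX G h σ τ)) := by
      simp only [vHatG, myA, myB, myX]
      rw [show T - (T - τ) = τ by ring]
    rw [hv, hPM]
    field_simp
    ring
  have hfinal := hsum.congr' hkey
  simpa using hfinal
end

section
/- Let r, q, σ, T be real with σ > 0, T > 0, let τ ∈ (0,T), let ρ > 0, and let f : (0,∞) × (0,T) → ℝ be continuous in its first variable at 1/ρ. Suppose W = W(x,·) is twice continuously differentiable in x and differentiable in τ on {x : 1/ρ < x < 1/ρ + δ} for some δ > 0 and satisfies ∂_τ W − (σ²/2)·(x²·∂²_x W + 2x·∂_x W) + (r−q)·x·∂_x W − f(x, T−τ)·(W + x·∂_x W) + r·W = 0 there, and that as x → (1/ρ)⁺ the following limits hold: W(x,τ) → ρ − 1, x·∂_x W(x,τ) → −ρ, ∂_τ W(x,τ) → 0, and x²·∂²_x W(x,τ) → L for some L ∈ ℝ. Then q·ρ − r + f(1/ρ, T−τ) = (σ²/2)·(L − 2ρ). -/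
open Real Filter Topology

/-- If `W` solves the dimension-reduced Asian call PDE on `(1/ρ, 1/ρ + δ)` and has the
smooth-pasting boundary limits `W → ρ − 1`, `x∂_xW → −ρ`, `∂_τW → 0`, `x²∂²_xW → L`
as `x → (1/ρ)⁺`, then the algebraic constraint
`qρ − r + f(1/ρ, T−τ) = (σ²/2)(L − 2ρ)` holds for the free boundary. -/
theorem free_boundary_algebraic_constraint (r q σ T τ ρ δ L : ℝ)
    (hσ : 0 < σ) (hT : 0 < T) (hτ : τ ∈ Set.Ioo (0:ℝ) T) (hρ : 0 < ρ) (hδ : 0 < δ)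
    (f : ℝ → ℝ → ℝ) (hf : ContinuousAt (fun x => f x (T - τ)) (1 / ρ))
    (W : ℝ → ℝ → ℝ)
    (hWx : ∀ x ∈ Set.Ioo (1 / ρ) (1 / ρ + δ), ContDiffAt ℝ 2 (fun x' => W x' τ) x)
    (hWτ : ∀ x ∈ Set.Ioo (1 / ρ) (1 / ρ + δ), DifferentiableAt ℝ (fun τ' => W x τ') τ)
    (hPDE : ∀ x ∈ Set.Ioo (1 / ρ) (1 / ρ + δ),
      deriv (fun τ' : ℝ => W x τ') τ
        - σ ^ 2 / 2 * (x ^ 2 * deriv (deriv (fun x' : ℝ => W x' τ)) x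
            + 2 * x * deriv (fun x' : ℝ => W x' τ) x)
        + (r - q) * x * deriv (fun x' : ℝ => W x' τ) x
        - f x (T - τ) * (W x τ + x * deriv (fun x' : ℝ => W x' τ) x)
        + r * W x τ = 0)
    (h1 : Tendsto (fun x => W x τ) (𝓝[>] (1 / ρ)) (𝓝 (ρ - 1)))
    (h2 : Tendsto (fun x => x * deriv (fun x' : ℝ => W x' τ) x) (𝓝[>] (1 / ρ)) (𝓝 (-ρ)))
    (h3 : Tendsto (fun x => deriv (fun τ' : ℝ => W x τ') τ) (𝓝[>] (1 / ρ)) (𝓝 0))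
    (h4 : Tendsto (fun x => x ^ 2 * deriv (deriv (fun x' : ℝ => W x' τ)) x)
      (𝓝[>] (1 / ρ)) (𝓝 L)) :
    q * ρ - r + f (1 / ρ) (T - τ) = σ ^ 2 / 2 * (L - 2 * ρ) := by
  set F := fun x : ℝ =>
      deriv (fun τ' : ℝ => W x τ') τ
        - σ ^ 2 / 2 * (x ^ 2 * deriv (deriv (fun x' : ℝ => W x' τ)) x
            + 2 * x * deriv (fun x' : ℝ => W x' τ) x)
        + (r - q) * x * deriv (fun x' : ℝ => W x' τ) x
        - f x (T - τ) * (W x τ + x * deriv (fun x' : ℝ => W x' τ) x)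
        + r * W x τ with hF
  have hfW : Tendsto (fun x => f x (T - τ)) (𝓝[>] (1 / ρ)) (𝓝 (f (1 / ρ) (T - τ))) :=
    hf.tendsto.mono_left nhdsWithin_le_nhds
  have hA : Tendsto F (𝓝[>] (1 / ρ))
      (𝓝 (0 - σ ^ 2 / 2 * (L + 2 * (-ρ)) + (r - q) * (-ρ)
        - f (1 / ρ) (T - τ) * ((ρ - 1) + (-ρ)) + r * (ρ - 1))) := by
    have := ((((h3.sub (((h4.add (h2.const_mul 2)).const_mul (σ ^ 2 / 2)))).add
        (h2.const_mul (r - q))).sub (hfW.mul (h1.add h2))).add (h1.const_mul r))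
    refine this.congr fun x => ?_
    simp only [hF]; ring
  have hzero : Tendsto F (𝓝[>] (1 / ρ)) (𝓝 0) := by
    have hmem : Set.Ioo (1 / ρ) (1 / ρ + δ) ∈ 𝓝[>] (1 / ρ) :=
      Ioo_mem_nhdsGT_of_mem ⟨le_refl _, by linarith⟩
    have : F =ᶠ[𝓝[>] (1 / ρ)] fun _ => (0 : ℝ) :=
      Filter.eventuallyEq_of_mem hmem fun x hx => hPDE x hx
    exact tendsto_const_nhds.congr' this.symm
  have := tendsto_nhds_unique hA hzero
  nlinarith [this]
end
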